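/- In the Prooφ mechanism, suppose an allocated user i changes its bid from f_i to some f with f < f_{S̄_ℓ+1}, all other bids unchanged. Then in the new sorted sequence, user i's task has rank strictly greater than S̄_ℓ, the new number of allocated provers ℓ' satisfies ℓ' ≤ ℓ, and user i's task is not allocated, so user i's utility after the deviation is 0. -/

import Mathlib

/-- If `g` is nonincreasing on `[1,n]` and `t < g m`, then at least `m` of the
values `g 1, …, g n` exceed `t`. -/
lemma cnt_ge_aux (n : ℕ) (g : ℕ → ℝ)
    (hg : ∀ a b, 1 ≤ a → a ≤ b → b ≤ n → g b ≤ g a)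
    (t : ℝ) (m : ℕ) (hm1 : 1 ≤ m) (hmn : m ≤ n) (ht : t < g m) :
    m ≤ Multiset.countP (fun x => t < x) ((Finset.Icc 1 n).val.map g) := by
  rw [Multiset.countP_map]
  have hsub : Finset.Icc 1 m ⊆ (Finset.Icc 1 n).filter (fun a => t < g a) := by
    intro j hj
    simp only [Finset.mem_Icc, Finset.mem_filter] at *
    exact ⟨⟨hj.1, hj.2.trans hmn⟩, lt_of_lt_of_le ht (hg j m hj.1 hj.2 hmn)⟩
  have := Finset.card_le_card hsub
  simp at this
  exact this

/-- If at least `m` of the values `g 1, …, g n` exceed `t` and `g` is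
nonincreasing on `[1,n]`, then `t < g m`. -/
lemma lt_of_le_countP_aux (n : ℕ) (g : ℕ → ℝ)
    (hg : ∀ a b, 1 ≤ a → a ≤ b → b ≤ n → g b ≤ g a)
    (t : ℝ) (m : ℕ) (hm1 : 1 ≤ m) (hmn : m ≤ n)
    (hc : m ≤ Multiset.countP (fun x => t < x) ((Finset.Icc 1 n).val.map g)) :
    t < g m := by
  by_contra h
  push_neg at h
  rw [Multiset.countP_map] at hc
  have hsub : (Finset.Icc 1 n).filter (fun a => t < g a) ⊆ Finset.Icc 1 (m - 1) := by
    intro j hj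
    simp only [Finset.mem_Icc, Finset.mem_filter] at *
    refine ⟨hj.1.1, ?_⟩
    by_contra hjm
    push_neg at hjm
    have : g j ≤ g m := hg m j hm1 (by omega) hj.1.2
    linarith [hj.2]
  have := Finset.card_le_card hsub
  simp only [Nat.card_Icc] at this
  have hcard : Multiset.card (Multiset.filter (fun a => t < g a) (Finset.Icc 1 n).val)
      = ((Finset.Icc 1 n).filter (fun a => t < g a)).card := rfl
  omega



/-- **Prooφ, UDSIC proof, Case 1.2.**  An allocated user `i` (rank `i ≤ Sbar ℓ`)
changes its bid to `fnew < f (Sbar ℓ + 1)`.  In the re-sorted sequence user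
`i`'s task has rank strictly greater than `Sbar ℓ` (every task at a position
`≤ Sbar ℓ` has fee strictly above `fnew`), the new number of allocated provers
satisfies `ℓ' ≤ ℓ`, and the task is not allocated (so the deviating user's
utility is `0`). -/
theorem proofee_udsic_case_allocated_low_bid
    (n N : ℕ) (f : ℕ → ℝ) (s : ℕ → ℕ) (p : ℕ → ℝ)
    (hf : ∀ a b, 1 ≤ a → a ≤ b → b ≤ n → f b ≤ f a)
    (hp : ∀ a b, 1 ≤ a → a ≤ b → b ≤ N → p a ≤ p b)
    (hs : ∀ j, 1 ≤ j → j ≤ N → 0 < s j)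
    (Sbar : ℕ → ℕ) (hSbar : ∀ j, Sbar j = ∑ k ∈ Finset.Icc 1 j, s k)
    (ℓ : ℕ) (hℓ1 : 1 ≤ ℓ) (hℓN : ℓ + 1 ≤ N) (hSn : Sbar ℓ + 1 ≤ n)
    (hℓ : p (ℓ + 1) ≤ f (Sbar ℓ + 1))
    (hℓmax : ∀ j, ℓ < j → j + 1 ≤ N → Sbar j + 1 ≤ n →
      f (Sbar j + 1) < p (j + 1))
    -- the deviating allocated user and its new bid
    (i : ℕ) (hi1 : 1 ≤ i) (hiS : i ≤ Sbar ℓ)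
    (fnew : ℝ) (hfnew : fnew < f (Sbar ℓ + 1))
    -- re-sorted bid sequence after the deviation
    (f' : ℕ → ℝ)
    (hf' : ∀ a b, 1 ≤ a → a ≤ b → b ≤ n → f' b ≤ f' a)
    (hmul : (Finset.Icc 1 n).val.map f' =
      fnew ::ₘ ((Finset.Icc 1 n).val.map f).erase (f i))
    -- the new number of allocated provers
    (ℓ' : ℕ) (hℓ'1 : 1 ≤ ℓ') (hℓ'N : ℓ' + 1 ≤ N) (hS'n : Sbar ℓ' + 1 ≤ n)
    (hℓ' : p (ℓ' + 1) ≤ f' (Sbar ℓ' + 1))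
    (hℓ'max : ∀ j, ℓ' < j → j + 1 ≤ N → Sbar j + 1 ≤ n →
      f' (Sbar j + 1) < p (j + 1)) :
    (∀ k, 1 ≤ k → k ≤ Sbar ℓ → fnew < f' k) ∧
    ℓ' ≤ ℓ ∧
    (∀ k, 1 ≤ k → k ≤ Sbar ℓ' → fnew < f' k) := by
  set M : Multiset ℝ := (Finset.Icc 1 n).val.map f with hM
  set M' : Multiset ℝ := (Finset.Icc 1 n).val.map f' with hM'
  have hiM : f i ∈ M := by
    apply Multiset.mem_map_of_mem
    rw [Finset.mem_val, Finset.mem_Icc]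
    omega
  have hfi : fnew < f i :=
    lt_of_lt_of_le hfnew (hf i (Sbar ℓ + 1) hi1 (by omega) hSn)
  -- counting relation between M and M'
  have key : ∀ t : ℝ,
      Multiset.countP (fun x => t < x) M' + (if t < f i then 1 else 0)
        = Multiset.countP (fun x => t < x) M + (if t < fnew then 1 else 0) := by
    intro t
    have h2 := Multiset.countP_cons (fun x => t < x) (f i) (M.erase (f i))
    rw [Multiset.cons_erase hiM] at h2
    have h3 : Multiset.countP (fun x => t < x) M'
        = Multiset.countP (fun x => t < x) (M.erase (f i))
          + (if t < fnew then 1 else 0) := by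
      rw [hmul, Multiset.countP_cons]
    rw [h2, h3]
    split_ifs <;> omega
  -- count of values above fnew
  have hA : Sbar ℓ + 1 ≤ Multiset.countP (fun x => fnew < x) M :=
    cnt_ge_aux n f hf fnew (Sbar ℓ + 1) (by omega) hSn hfnew
  have hA' : Sbar ℓ ≤ Multiset.countP (fun x => fnew < x) M' := by
    have hk := key fnew
    simp only [lt_irrefl, if_false, hfi, if_true] at hk
    omega
  have first : ∀ k, 1 ≤ k → k ≤ Sbar ℓ → fnew < f' k := by
    intro k hk1 hk2
    exact lt_of_le_countP_aux n f' hf' fnew k hk1 (by omega)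
      (le_trans (le_trans hk2 hA') (le_refl _))
  -- pointwise domination
  have hle : ∀ m, 1 ≤ m → m ≤ n → f' m ≤ f m := by
    intro m hm1 hmn
    by_contra h
    push_neg at h
    have c1 : m ≤ Multiset.countP (fun x => f m < x) M' :=
      cnt_ge_aux n f' hf' (f m) m hm1 hmn h
    have c2 : ¬ m ≤ Multiset.countP (fun x => f m < x) M := fun hc =>
      lt_irrefl _ (lt_of_le_countP_aux n f hf (f m) m hm1 hmn hc)
    have c3 : Multiset.countP (fun x => f m < x) M'
        ≤ Multiset.countP (fun x => f m < x) M := by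
      have hk := key (f m)
      by_cases h1 : f m < fnew
      · have h2 : f m < f i := h1.trans hfi
        simp only [h1, if_true, h2] at hk
        omega
      · simp only [h1, if_false] at hk
        split_ifs at hk <;> omega
    omega
  have hll : ℓ' ≤ ℓ := by
    by_contra h
    push_neg at h
    have h1 := hℓmax ℓ' h hℓ'N hS'n
    have h2 := hle (Sbar ℓ' + 1) (by omega) hS'n
    linarith
  refine ⟨first, hll, ?_⟩
  have hSS : Sbar ℓ' ≤ Sbar ℓ := by
    rw [hSbar, hSbar]
    exact Finset.sum_le_sum_of_subset (Finset.Icc_subset_Icc_right hll)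
  exact fun k hk1 hk2 => first k hk1 (hk2.trans hSS)
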